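/- arXiv:1910.00474 — 2 statements merged into one kernel-verified Lean document; each statement's English description precedes it below -/
import Mathlib

section
/- Let r and s be duplicate-free TP relations over the same fact type, let op ∈ {∪ᵀᵖ, ∩ᵀᵖ, −ᵀᵖ}, and let f be a fact such that exactly n₁ tuples of r and n₂ tuples of s have fact f, with n = n₁ + n₂ ≥ 1. Then the number of tuples of r opᵀᵖ s with fact f is at most 2n − 1. -/
/-- Boolean lineage formulas over a type `V` of tuple identifiers. -/
inductive LineageExpr (V : Type) : Type where
  | var : V → LineageExpr V
  | not : LineageExpr V → LineageExpr V
  | and : LineageExpr V → LineageExpr V → LineageExpr V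
  | or  : LineageExpr V → LineageExpr V → LineageExpr V

/-- A TP tuple: a fact, a lineage expression and a half-open time interval `[ts, te)`. -/
structure TPTuple (F V : Type) where
  fact : F
  lam : LineageExpr V
  ts : ℕ
  te : ℕ

/-- Time point `t` belongs to the interval of tuple `u`. -/
def TPTuple.memT {F V : Type} (t : ℕ) (u : TPTuple F V) : Prop :=
  u.ts ≤ t ∧ t < u.te

/-- All tuples of the relation have nonempty intervals (`Ts < Te`). -/
def WF {F V : Type} (r : Set (TPTuple F V)) : Prop :=
  ∀ u ∈ r, u.ts < u.te

/-- A TP relation is duplicate-free iff any two distinct tuples have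
different facts or disjoint time intervals. -/
def DupFree {F V : Type} (r : Set (TPTuple F V)) : Prop :=
  ∀ u ∈ r, ∀ u' ∈ r, u ≠ u' →
    u.fact ≠ u'.fact ∨ ∀ t : ℕ, ¬ (TPTuple.memT t u ∧ TPTuple.memT t u')

open Classical in
/-- `lamAt r f t` = the lineage `λ^{r,f}_t` of the (for duplicate-free `r`, unique)
tuple of `r` with fact `f` whose interval contains `t`; `none` if no such tuple exists. -/
noncomputable def lamAt {F V : Type} (r : Set (TPTuple F V)) (f : F) (t : ℕ) :
    Option (LineageExpr V) :=
  if h : ∃ u, u ∈ r ∧ u.fact = f ∧ u.ts ≤ t ∧ t < u.te then some h.choose.lam else none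
/-- The three TP set operations. -/
inductive TPOp : Type
  | inter
  | diff
  | union

/-- The filter condition `φ_op` on pairs of possibly-null lineages. -/
def opFilter {V : Type} : TPOp → Option (LineageExpr V) → Option (LineageExpr V) → Prop
  | .inter, l1, l2 => l1 ≠ none ∧ l2 ≠ none
  | .diff,  l1, _  => l1 ≠ none
  | .union, l1, l2 => l1 ≠ none ∨ l2 ≠ none

/-- The lineage-concatenation function `g_op` (`none` when undefined):
`and`, `andNot` and `or` respectively. -/
def gOp {V : Type} :
    TPOp → Option (LineageExpr V) → Option (LineageExpr V) → Option (LineageExpr V)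
  | .inter, some a, some b => some (.and a b)
  | .inter, _, _ => none
  | .diff, some a, none => some a
  | .diff, some a, some b => some (.and a (.not b))
  | .diff, none, _ => none
  | .union, some a, none => some a
  | .union, none, some b => some b
  | .union, some a, some b => some (.or a b)
  | .union, none, none => none

/-- The result `r opᵀᵖ s` of a TP set operation: tuples `(f, λ, [ts,te))` such that
on all of `[ts,te)` the pair of input lineages is constant, satisfies `φ_op` and
yields `λ` via `g_op`, and the interval is maximal. -/
def opResult {F V : Type} (op : TPOp) (r s : Set (TPTuple F V)) : Set (TPTuple F V) :=
  {u | u.ts < u.te ∧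
    ∃ l1 l2 : Option (LineageExpr V),
      opFilter op l1 l2 ∧
      gOp op l1 l2 = some u.lam ∧
      (∀ t : ℕ, u.ts ≤ t → t < u.te → lamAt r u.fact t = l1 ∧ lamAt s u.fact t = l2) ∧
      (u.ts = 0 ∨
        ¬ (opFilter op (lamAt r u.fact (u.ts - 1)) (lamAt s u.fact (u.ts - 1)) ∧
           gOp op (lamAt r u.fact (u.ts - 1)) (lamAt s u.fact (u.ts - 1)) = some u.lam)) ∧
      ¬ (opFilter op (lamAt r u.fact u.te) (lamAt s u.fact u.te) ∧
         gOp op (lamAt r u.fact u.te) (lamAt s u.fact u.te) = some u.lam)}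

lemma TPTuple.ext' {F V : Type} {u u' : TPTuple F V} (h1 : u.fact = u'.fact)
    (h2 : u.lam = u'.lam) (h3 : u.ts = u'.ts) (h4 : u.te = u'.te) : u = u' := by
  cases u; cases u'; simp_all

lemma lamAt_eq_of_mem {F V : Type} {r : Set (TPTuple F V)} (hDF : DupFree r)
    {u : TPTuple F V} (hu : u ∈ r) {f : F} {t : ℕ}
    (hf : u.fact = f) (ha : u.ts ≤ t) (hb : t < u.te) :
    lamAt r f t = some u.lam := by
  have hex : ∃ w, w ∈ r ∧ w.fact = f ∧ w.ts ≤ t ∧ t < w.te := ⟨u, hu, hf, ha, hb⟩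
  rw [lamAt, dif_pos hex]
  obtain ⟨hw, hwf, hw1, hw2⟩ := hex.choose_spec
  have heq : hex.choose = u := by
    by_contra hne
    rcases hDF _ hw _ hu hne with h | h
    · exact h (hwf.trans hf.symm)
    · exact h t ⟨⟨hw1, hw2⟩, ⟨ha, hb⟩⟩
  rw [heq]

lemma lamAt_ne_none {F V : Type} {r : Set (TPTuple F V)} {f : F} {t : ℕ}
    (h : lamAt r f t ≠ none) :
    ∃ u, u ∈ r ∧ u.fact = f ∧ u.ts ≤ t ∧ t < u.te := by
  by_contra h'
  rw [lamAt, dif_neg h'] at h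
  exact h rfl

lemma lamAt_change {F V : Type} {r : Set (TPTuple F V)} (hDF : DupFree r) {f : F} {t : ℕ}
    (ht : 0 < t) (hne : lamAt r f t ≠ lamAt r f (t - 1)) :
    ∃ v, v ∈ r ∧ v.fact = f ∧ (v.ts = t ∨ v.te = t) := by
  by_cases h : ∃ u, u ∈ r ∧ u.fact = f ∧ u.ts ≤ t ∧ t < u.te
  · obtain ⟨v, hv, hvf, ha, hb⟩ := h
    refine ⟨v, hv, hvf, Or.inl ?_⟩
    by_contra hts
    have h1 : v.ts ≤ t - 1 := by omega
    have e1 := lamAt_eq_of_mem hDF hv hvf h1 (show t - 1 < v.te by omega)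
    have e2 := lamAt_eq_of_mem hDF hv hvf ha hb
    exact hne (e2.trans e1.symm)
  · have ht0 : lamAt r f t = none := by rw [lamAt, dif_neg h]
    have hpre : lamAt r f (t - 1) ≠ none := by
      rw [ht0] at hne; exact fun h' => hne h'.symm
    obtain ⟨w, hw, hwf, hw1, hw2⟩ := lamAt_ne_none hpre
    refine ⟨w, hw, hwf, Or.inr ?_⟩
    by_contra hte
    exact h ⟨w, hw, hwf, by omega, by omega⟩

/-- For duplicate-free TP relations `r` and `s`, any TP set
operation `op`, and a fact `f` such that exactly `n₁` tuples of `r` and `n₂`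
tuples of `s` have fact `f` with `n = n₁ + n₂ ≥ 1`, the number of tuples of
`r opᵀᵖ s` with fact `f` is at most `2n − 1`. -/
theorem tp_output_per_fact_bound {F V : Type}
    (r s : Set (TPTuple F V)) (hrfin : r.Finite) (hsfin : s.Finite)
    (hrWF : WF r) (hsWF : WF s) (hrDF : DupFree r) (hsDF : DupFree s)
    (op : TPOp) (f : F) (n1 n2 : ℕ)
    (h1 : {u ∈ r | u.fact = f}.ncard = n1)
    (h2 : {u ∈ s | u.fact = f}.ncard = n2)
    (hn : 1 ≤ n1 + n2) :
    {u ∈ opResult op r s | u.fact = f}.ncard ≤ 2 * (n1 + n2) - 1 := by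
  classical
  set A := {u ∈ r | u.fact = f} with hA
  set B := {u ∈ s | u.fact = f} with hB
  set O := {u ∈ opResult op r s | u.fact = f} with hOdef
  have hAfin : A.Finite := hrfin.subset (fun u hu => hu.1)
  have hBfin : B.Finite := hsfin.subset (fun u hu => hu.1)
  have hABfin : (A ∪ B).Finite := hAfin.union hBfin
  have hABne : (A ∪ B).Nonempty := by
    rcases Nat.eq_zero_or_pos n1 with h | h
    · exact Set.Nonempty.mono Set.subset_union_right
        (Set.nonempty_of_ncard_ne_zero (by rw [h2]; omega))
    · exact Set.Nonempty.mono Set.subset_union_left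
        (Set.nonempty_of_ncard_ne_zero (by rw [h1]; omega))
  obtain ⟨m, hm, hmax0⟩ := hABfin.exists_maximalFor TPTuple.te _ hABne
  have hmax : ∀ v ∈ A ∪ B, v.te ≤ m.te := by
    intro v hv
    by_contra hlt
    have := hmax0 hv (by omega)
    omega
  -- key: every output start point is an endpoint of an input tuple, and is < m.te
  have key : ∀ u ∈ O, (∃ v ∈ A ∪ B, v.ts = u.ts ∨ v.te = u.ts) ∧ u.ts < m.te := by
    intro u hu
    obtain ⟨⟨hlt, l1, l2, hfil, hg, hconst, hleft, _⟩, hf⟩ := hu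
    have hl1 : lamAt r f u.ts = l1 := by
      have := (hconst u.ts le_rfl hlt).1; rwa [hf] at this
    have hl2 : lamAt s f u.ts = l2 := by
      have := (hconst u.ts le_rfl hlt).2; rwa [hf] at this
    have hsome : ∃ v, v ∈ A ∪ B ∧ v.ts ≤ u.ts ∧ u.ts < v.te := by
      have hor : l1 ≠ none ∨ l2 ≠ none := by
        cases op with
        | inter => exact Or.inl hfil.1
        | diff => exact Or.inl hfil
        | union => exact hfil
      rcases hor with h | h
      · obtain ⟨v, hv, hvf, ha, hb⟩ := lamAt_ne_none (hl1 ▸ h)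
        exact ⟨v, Or.inl ⟨hv, hvf⟩, ha, hb⟩
      · obtain ⟨v, hv, hvf, ha, hb⟩ := lamAt_ne_none (hl2 ▸ h)
        exact ⟨v, Or.inr ⟨hv, hvf⟩, ha, hb⟩
    obtain ⟨v, hv, hva, hvb⟩ := hsome
    have hltM : u.ts < m.te := lt_of_lt_of_le hvb (hmax v hv)
    refine ⟨?_, hltM⟩
    rcases Nat.eq_zero_or_pos u.ts with h0 | h0
    · exact ⟨v, hv, Or.inl (by omega)⟩
    · rcases hleft with h | hnot
      · omega
      rw [hf] at hnot
      by_cases hch : lamAt r f u.ts = lamAt r f (u.ts - 1)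
      · by_cases hch2 : lamAt s f u.ts = lamAt s f (u.ts - 1)
        · exfalso
          apply hnot
          rw [← hch, ← hch2, hl1, hl2]
          exact ⟨hfil, hg⟩
        · obtain ⟨w, hw, hwf, hor⟩ := lamAt_change hsDF h0 hch2
          exact ⟨w, Or.inr ⟨hw, hwf⟩, hor⟩
      · obtain ⟨w, hw, hwf, hor⟩ := lamAt_change hrDF h0 hch
        exact ⟨w, Or.inl ⟨hw, hwf⟩, hor⟩
  -- injectivity of the start point on the output
  have hinj : Set.InjOn TPTuple.ts O := by
    intro u hu u' hu' hts
    obtain ⟨⟨hlt, l1, l2, hfil, hg, hconst, _, hright⟩, hf⟩ := hu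
    obtain ⟨⟨hlt', l1', l2', hfil', hg', hconst', _, hright'⟩, hf'⟩ := hu'
    have e1 := hconst u.ts le_rfl hlt
    have e1' := hconst' u'.ts le_rfl hlt'
    rw [hf] at e1
    rw [hf', ← hts] at e1'
    have hl1 : l1 = l1' := by rw [← e1.1, ← e1'.1]
    have hl2 : l2 = l2' := by rw [← e1.2, ← e1'.2]
    have hlam : u.lam = u'.lam := by
      have h : some u.lam = some u'.lam := by rw [← hg, ← hg', hl1, hl2]
      exact Option.some_injective _ h
    have hte : u.te = u'.te := by
      by_contra hne
      rcases Nat.lt_or_ge u.te u'.te with h | h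
      · have hc := hconst' u.te (by omega) h
        rw [hf'] at hc
        apply hright
        rw [hf, hc.1, hc.2, ← hl1, ← hl2]
        exact ⟨hfil, hg⟩
      · have h' : u'.te < u.te := by omega
        have hc := hconst u'.te (by omega) h'
        rw [hf] at hc
        apply hright'
        rw [hf', hc.1, hc.2, hl1, hl2]
        exact ⟨hfil', hg'⟩
    exact TPTuple.ext' (hf.trans hf'.symm) hlam hts hte
  -- counting
  set TsS := TPTuple.ts '' (A ∪ B) with hTsS
  set TeS := TPTuple.te '' (A ∪ B) with hTeS
  have hTsfin : TsS.Finite := hABfin.image _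
  have hTefin : TeS.Finite := hABfin.image _
  have himg : TPTuple.ts '' O ⊆ (TsS \ {m.te}) ∪ (TeS \ {m.te}) := by
    rintro x ⟨u, hu, rfl⟩
    obtain ⟨⟨v, hv, hor⟩, hltM⟩ := key u hu
    have hne : u.ts ≠ m.te := by omega
    rcases hor with h | h
    · exact Or.inl ⟨⟨v, hv, h⟩, by simpa using hne⟩
    · exact Or.inr ⟨⟨v, hv, h⟩, by simpa using hne⟩
  have hcard1 : (TPTuple.ts '' O).ncard ≤ (TsS \ {m.te}).ncard + (TeS \ {m.te}).ncard := by
    exact le_trans (Set.ncard_le_ncard himg (hTsfin.diff.union hTefin.diff))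
      (Set.ncard_union_le _ _)
  have hO : O.ncard = (TPTuple.ts '' O).ncard := (Set.ncard_image_of_injOn hinj).symm
  have hmM : m.te ∈ TeS := ⟨m, hm, rfl⟩
  have hTe1 : (TeS \ {m.te}).ncard = TeS.ncard - 1 :=
    Set.ncard_diff_singleton_of_mem hmM
  have hAB : (A ∪ B).ncard ≤ n1 + n2 := by
    rw [← h1, ← h2]
    exact Set.ncard_union_le _ _
  have hTs : TsS.ncard ≤ n1 + n2 :=
    le_trans (Set.ncard_image_le hABfin) hAB
  have hTe : TeS.ncard ≤ n1 + n2 :=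
    le_trans (Set.ncard_image_le hABfin) hAB
  have hTs' : (TsS \ {m.te}).ncard ≤ TsS.ncard :=
    Set.ncard_le_ncard Set.diff_subset hTsfin
  omega
end

section
/- Let Q be a non-repeating TP set query over duplicate-free TP relations with atomic, pairwise distinct base lineages, where the full set of base tuple identifiers is a finite type V, and let μ be the product Bernoulli measure on assignments V → Bool in which identifier v is true with probability p_v ∈ [0,1] independently. Then for every result tuple u of Q, the marginal probability μ({a | u.λ evaluates to true under a}) equals the value Pe(u.λ) computed by recursion: Pe(v) = p_v, Pe(¬ψ) = 1 − Pe(ψ), Pe(ψ₁ ∧ ψ₂) = Pe(ψ₁)·Pe(ψ₂), Pe(ψ₁ ∨ ψ₂) = Pe(ψ₁) + Pe(ψ₂) − Pe(ψ₁)·Pe(ψ₂). -/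
/-- TP set queries over base relations indexed by `ι`. -/
inductive TPQuery (ι : Type) : Type where
  | base : ι → TPQuery ι
  | inter : TPQuery ι → TPQuery ι → TPQuery ι
  | diff : TPQuery ι → TPQuery ι → TPQuery ι
  | union : TPQuery ι → TPQuery ι → TPQuery ι

/-- The list of (indices of) base relations occurring in a query. -/
def TPQuery.idxList {ι : Type} : TPQuery ι → List ι
  | .base i => [i]
  | .inter q1 q2 => q1.idxList ++ q2.idxList
  | .diff q1 q2 => q1.idxList ++ q2.idxList
  | .union q1 q2 => q1.idxList ++ q2.idxList

/-- A query is non-repeating iff each base relation occurs at most once in it. -/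
def TPQuery.NonRepeating {ι : Type} (q : TPQuery ι) : Prop := q.idxList.Nodup

/-- Evaluation of a TP set query, given an assignment `R` of base relations. -/
def TPQuery.eval {ι F V : Type} (R : ι → Set (TPTuple F V)) :
    TPQuery ι → Set (TPTuple F V)
  | .base i => R i
  | .inter q1 q2 => opResult TPOp.inter (q1.eval R) (q2.eval R)
  | .diff q1 q2 => opResult TPOp.diff (q1.eval R) (q2.eval R)
  | .union q1 q2 => opResult TPOp.union (q1.eval R) (q2.eval R)
/-- The base relations have atomic, pairwise distinct lineages: every tuple's lineage
is a single tuple identifier, and lineages of distinct base tuples (within one base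
relation or across distinct base relations) are distinct. -/
def AtomicDistinctLineages {ι F V : Type} (R : ι → Set (TPTuple F V)) : Prop :=
  (∀ i, ∀ u ∈ R i, ∃ v : V, u.lam = LineageExpr.var v) ∧
  (∀ i j, ∀ u ∈ R i, ∀ u' ∈ R j, (i ≠ j ∨ u ≠ u') → u.lam ≠ u'.lam)
/-- Evaluation of a Boolean lineage formula under an assignment of truth values. -/
def LineageExpr.eval {V : Type} (a : V → Bool) : LineageExpr V → Bool
  | .var v => a v
  | .not φ => !(φ.eval a)
  | .and φ ψ => φ.eval a && ψ.eval a
  | .or φ ψ => φ.eval a || ψ.eval a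

/-- The set of variables occurring in a Boolean formula. -/
def LineageExpr.vars {V : Type} : LineageExpr V → Set V
  | .var v => {v}
  | .not φ => φ.vars
  | .and φ ψ => φ.vars ∪ ψ.vars
  | .or φ ψ => φ.vars ∪ ψ.vars

open MeasureTheory in
/-- The product Bernoulli measure on assignments `V → Bool`: coordinates are
independent and coordinate `v` is `true` with probability `p v`. -/
noncomputable def prodBernoulli {V : Type} [Fintype V] (p : V → ENNReal)
    (hp : ∀ v, p v ≤ 1) : Measure (V → Bool) :=
  Measure.pi fun v => (PMF.bernoulli (p v).toNNReal
    (by simpa using ENNReal.toNNReal_mono ENNReal.one_ne_top (hp v))).toMeasure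
/-- The recursive probability valuation of a Boolean formula:
`Pe(v) = p v`, `Pe(¬ψ) = 1 − Pe ψ`, `Pe(ψ₁ ∧ ψ₂) = Pe ψ₁ · Pe ψ₂`,
`Pe(ψ₁ ∨ ψ₂) = Pe ψ₁ + Pe ψ₂ − Pe ψ₁ · Pe ψ₂`. -/
noncomputable def Pe {V : Type} (p : V → ℝ) : LineageExpr V → ℝ
  | .var v => p v
  | .not φ => 1 - Pe p φ
  | .and φ ψ => Pe p φ * Pe p ψ
  | .or φ ψ => Pe p φ + Pe p ψ - Pe p φ * Pe p ψ

/- ===================== Auxiliary development ===================== -/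

open MeasureTheory

/-- Evaluation of a formula depends only on its variables. -/
lemma LineageExpr.eval_congr {V : Type} (φ : LineageExpr V) {a a' : V → Bool}
    (h : ∀ v ∈ φ.vars, a v = a' v) : φ.eval a = φ.eval a' := by
  induction φ with
  | var v => exact h v rfl
  | not φ ih => simp only [LineageExpr.eval]; rw [ih h]
  | and φ ψ ih1 ih2 =>
      simp only [LineageExpr.eval]
      rw [ih1 fun v hv => h v (Or.inl hv), ih2 fun v hv => h v (Or.inr hv)]
  | or φ ψ ih1 ih2 =>
      simp only [LineageExpr.eval]
      rw [ih1 fun v hv => h v (Or.inl hv), ih2 fun v hv => h v (Or.inr hv)]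

/-- Real-valued weight of a single coordinate. -/
def Wt {V : Type} (p : V → ℝ) (v : V) (b : Bool) : ℝ := if b then p v else 1 - p v

/-- The (finite) sum of the weights of assignments satisfying `φ`. -/
noncomputable def Psum {V : Type} [Fintype V] [DecidableEq V] (p : V → ℝ)
    (φ : LineageExpr V) : ℝ :=
  ∑ a : V → Bool, if φ.eval a then ∏ v, Wt p v (a v) else 0

lemma prodBernoulli_isProb {V : Type} [Fintype V] (q : V → ENNReal) (hq : ∀ v, q v ≤ 1) :
    IsProbabilityMeasure (prodBernoulli q hq) := by
  unfold prodBernoulli; infer_instance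

lemma prodBernoulli_singleton {V : Type} [Fintype V] (q : V → ENNReal) (hq : ∀ v, q v ≤ 1)
    (a : V → Bool) :
    prodBernoulli q hq {a} = ∏ v, cond (a v) (q v) (1 - q v) := by
  have h1 : ({a} : Set (V → Bool)) = Set.pi Set.univ fun v => {a v} := by
    ext b
    simp only [Set.mem_singleton_iff, Set.mem_pi, Set.mem_univ, forall_true_left,
      funext_iff, Set.mem_singleton_iff]
  rw [prodBernoulli, h1, Measure.pi_pi]
  refine Finset.prod_congr rfl fun v _ => ?_
  rw [PMF.toMeasure_apply_singleton _ _ (measurableSet_singleton _)]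
  refine (PMF.bernoulli_apply _ _).trans ?_
  have hne : q v ≠ ⊤ := ne_top_of_le_ne_top ENNReal.one_ne_top (hq v)
  cases a v <;> simp [ENNReal.coe_sub, ENNReal.coe_toNNReal hne]

lemma prodBernoulli_toReal {V : Type} [Fintype V] [DecidableEq V]
    (p : V → ℝ) (hp0 : ∀ v, 0 ≤ p v) (hp1 : ∀ v, p v ≤ 1) (s : Set (V → Bool)) :
    (prodBernoulli (fun v => ENNReal.ofReal (p v))
        (fun v => ENNReal.ofReal_le_one.mpr (hp1 v)) s).toReal
      = ∑ a : V → Bool, Set.indicator s (fun a => ∏ v, Wt p v (a v)) a := by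
  classical
  set μ := prodBernoulli (fun v => ENNReal.ofReal (p v))
      (fun v => ENNReal.ofReal_le_one.mpr (hp1 v)) with hμ
  haveI : IsProbabilityMeasure μ := prodBernoulli_isProb _ _
  have hsing : ∀ a : V → Bool, (μ {a}).toReal = ∏ v, Wt p v (a v) := by
    intro a
    rw [hμ, prodBernoulli_singleton, ENNReal.toReal_prod]
    refine Finset.prod_congr rfl fun v _ => ?_
    cases hav : a v with
    | true => simp [Wt, ENNReal.toReal_ofReal (hp0 v)]
    | false =>
        have h2 : (1 : ENNReal) - ENNReal.ofReal (p v) = ENNReal.ofReal (1 - p v) := by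
          rw [ENNReal.ofReal_sub _ (hp0 v), ENNReal.ofReal_one]
        simp [Wt, h2, ENNReal.toReal_ofReal (by linarith [hp1 v] : (0:ℝ) ≤ 1 - p v)]
  have hcover : s = ⋃ a ∈ Finset.univ.filter (fun a : V → Bool => a ∈ s), ({a} : Set (V → Bool)) := by
    ext a; simp
  have hms : ∀ a ∈ Finset.univ.filter (fun a : V → Bool => a ∈ s),
      MeasurableSet ({a} : Set (V → Bool)) := fun a _ => measurableSet_singleton a
  have hd : (↑(Finset.univ.filter (fun a : V → Bool => a ∈ s)) : Set (V → Bool)).PairwiseDisjoint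
      (fun a => ({a} : Set (V → Bool))) := fun x _ y _ hxy => by
    simpa [Set.disjoint_singleton] using hxy
  have hμs : (μ s).toReal
      = ∑ a ∈ Finset.univ.filter (fun a : V → Bool => a ∈ s), (μ {a}).toReal := by
    conv_lhs => rw [hcover]
    rw [measure_biUnion_finset hd hms, ENNReal.toReal_sum (fun a _ => measure_ne_top μ _)]
  rw [hμs]
  calc (∑ a ∈ Finset.univ.filter (fun a : V → Bool => a ∈ s), (μ {a}).toReal)
      = ∑ a ∈ Finset.univ.filter (fun a : V → Bool => a ∈ s), ∏ v, Wt p v (a v) :=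
        Finset.sum_congr rfl fun a _ => hsing a
    _ = ∑ a : V → Bool, if a ∈ s then ∏ v, Wt p v (a v) else 0 := Finset.sum_filter _ _
    _ = ∑ a : V → Bool, Set.indicator s (fun a => ∏ v, Wt p v (a v)) a :=
        Finset.sum_congr rfl fun a _ =>
          (Set.indicator_apply s (fun a => ∏ v, Wt p v (a v)) a).symm

lemma Psum_eq_toReal {V : Type} [Fintype V] [DecidableEq V]
    (p : V → ℝ) (hp0 : ∀ v, 0 ≤ p v) (hp1 : ∀ v, p v ≤ 1) (φ : LineageExpr V) :
    (prodBernoulli (fun v => ENNReal.ofReal (p v))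
        (fun v => ENNReal.ofReal_le_one.mpr (hp1 v)) {a | φ.eval a = true}).toReal
      = Psum p φ := by
  classical
  rw [prodBernoulli_toReal p hp0 hp1, Psum]
  refine Finset.sum_congr rfl fun a _ => ?_
  by_cases h : φ.eval a = true <;> simp [Set.indicator_apply, Set.mem_setOf_eq, h]

lemma Psum_total {V : Type} [Fintype V] [DecidableEq V]
    (p : V → ℝ) (hp0 : ∀ v, 0 ≤ p v) (hp1 : ∀ v, p v ≤ 1) :
    (∑ a : V → Bool, ∏ v, Wt p v (a v)) = 1 := by
  classical
  haveI := prodBernoulli_isProb (fun v => ENNReal.ofReal (p v))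
    (fun v => ENNReal.ofReal_le_one.mpr (hp1 v))
  have h := prodBernoulli_toReal p hp0 hp1 Set.univ
  simpa using h.symm

lemma Psum_var {V : Type} [Fintype V] [DecidableEq V]
    (p : V → ℝ) (hp0 : ∀ v, 0 ≤ p v) (hp1 : ∀ v, p v ≤ 1) (v : V) :
    Psum p (LineageExpr.var v) = p v := by
  classical
  rw [← Psum_eq_toReal p hp0 hp1]
  have h1 : {a : V → Bool | (LineageExpr.var v).eval a = true}
      = Set.pi Set.univ fun j => if j = v then {true} else Set.univ := by
    ext a
    simp only [Set.mem_setOf_eq, LineageExpr.eval, Set.mem_pi, Set.mem_univ, forall_true_left]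
    constructor
    · intro h j
      by_cases hj : j = v
      · subst hj; simp [h]
      · simp [hj]
    · intro h
      have := h v
      simpa using this
  rw [h1, prodBernoulli, Measure.pi_pi]
  have h2 : ∀ j : V, j ≠ v →
      (PMF.bernoulli (ENNReal.ofReal (p j)).toNNReal
        (by simpa using ENNReal.toNNReal_mono ENNReal.one_ne_top (ENNReal.ofReal_le_one.mpr (hp1 j)))).toMeasure
        (if j = v then {true} else Set.univ) = 1 := by
    intro j hj; rw [if_neg hj]; exact measure_univ
  rw [Finset.prod_eq_single v (fun j _ hj => h2 j hj) (by simp)]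
  rw [if_pos rfl, PMF.toMeasure_apply_singleton _ _ (measurableSet_singleton _)]
  refine (congrArg ENNReal.toReal (PMF.bernoulli_apply _ _)).trans ?_
  simp [ENNReal.toReal_ofReal (hp0 v), hp0 v]

lemma Psum_not {V : Type} [Fintype V] [DecidableEq V]
    (p : V → ℝ) (hp0 : ∀ v, 0 ≤ p v) (hp1 : ∀ v, p v ≤ 1) (φ : LineageExpr V) :
    Psum p (LineageExpr.not φ) = 1 - Psum p φ := by
  classical
  rw [eq_sub_iff_add_eq, Psum, Psum, ← Finset.sum_add_distrib,
    ← Psum_total p hp0 hp1]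
  refine Finset.sum_congr rfl fun a _ => ?_
  cases h : φ.eval a <;> simp [LineageExpr.eval, h]

lemma Psum_or {V : Type} [Fintype V] [DecidableEq V]
    (p : V → ℝ) (φ ψ : LineageExpr V) :
    Psum p (LineageExpr.or φ ψ)
      = Psum p φ + Psum p ψ - Psum p (LineageExpr.and φ ψ) := by
  classical
  simp only [Psum]
  rw [← Finset.sum_add_distrib, ← Finset.sum_sub_distrib]
  refine Finset.sum_congr rfl fun a _ => ?_
  cases h1 : φ.eval a <;> cases h2 : ψ.eval a <;>
    simp [LineageExpr.eval, h1, h2]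

set_option maxHeartbeats 1000000 in
lemma Psum_and_split {V : Type} [Fintype V] [DecidableEq V]
    (p : V → ℝ) (hp0 : ∀ v, 0 ≤ p v) (hp1 : ∀ v, p v ≤ 1) (φ ψ : LineageExpr V)
    (hd : Disjoint φ.vars ψ.vars) :
    Psum p (LineageExpr.and φ ψ) = Psum p φ * Psum p ψ := by
  classical
  set S : V → Prop := fun v => v ∈ φ.vars with hS
  set e := Equiv.piEquivPiSubtypeProd S (fun _ => Bool) with he
  set X : ({v // S v} → Bool) → ℝ := fun b => ∏ v : {v // S v}, Wt p v.1 (b v) with hX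
  set Y : ({v // ¬ S v} → Bool) → ℝ := fun c => ∏ v : {v // ¬ S v}, Wt p v.1 (c v) with hY
  set Fb : ({v // S v} → Bool) → Bool :=
    fun b => φ.eval (e.symm (b, fun _ => false)) with hF
  set Gb : ({v // ¬ S v} → Bool) → Bool :=
    fun c => ψ.eval (e.symm (fun _ => false, c)) with hG
  have hsymm : ∀ (b : {v // S v} → Bool) (c : {v // ¬ S v} → Bool) (v : V),
      e.symm (b, c) v = if h : S v then b ⟨v, h⟩ else c ⟨v, h⟩ := by
    intro b c v
    simp [he, Equiv.piEquivPiSubtypeProd]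
  have hevφ : ∀ (b : {v // S v} → Bool) (c : {v // ¬ S v} → Bool),
      φ.eval (e.symm (b, c)) = Fb b := by
    intro b c
    refine LineageExpr.eval_congr φ fun v hv => ?_
    rw [hsymm, hsymm, dif_pos hv, dif_pos hv]
  have hevψ : ∀ (b : {v // S v} → Bool) (c : {v // ¬ S v} → Bool),
      ψ.eval (e.symm (b, c)) = Gb c := by
    intro b c
    refine LineageExpr.eval_congr ψ fun v hv => ?_
    have hnv : ¬ S v := fun hSv => Set.disjoint_left.mp hd hSv hv
    rw [hsymm, hsymm, dif_neg hnv, dif_neg hnv]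
  have hprod : ∀ (b : {v // S v} → Bool) (c : {v // ¬ S v} → Bool),
      (∏ v, Wt p v (e.symm (b, c) v)) = X b * Y c := by
    intro b c
    rw [← Fintype.prod_subtype_mul_prod_subtype S (fun v => Wt p v (e.symm (b, c) v))]
    congr 1
    · refine Finset.prod_congr rfl fun v _ => ?_
      rw [hsymm, dif_pos v.2]
    · refine Finset.prod_congr rfl fun v _ => ?_
      rw [hsymm, dif_neg v.2]
  have hkey : ∀ f : (V → Bool) → ℝ,
      (∑ a : V → Bool, f a)
        = ∑ b : {v // S v} → Bool, ∑ c : {v // ¬ S v} → Bool, f (e.symm (b, c)) := by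
    intro f
    rw [← Equiv.sum_comp e.symm f, Fintype.sum_prod_type]
  set SA : ℝ := ∑ b : {v // S v} → Bool, if Fb b then X b else 0 with hSA
  set SB : ℝ := ∑ c : {v // ¬ S v} → Bool, if Gb c then Y c else 0 with hSB
  set TX : ℝ := ∑ b : {v // S v} → Bool, X b with hTX
  set TY : ℝ := ∑ c : {v // ¬ S v} → Bool, Y c with hTY
  have h1 : Psum p (LineageExpr.and φ ψ) = SA * SB := by
    rw [Psum, hkey]
    rw [hSA, hSB, Finset.sum_mul_sum]
    refine Finset.sum_congr rfl fun b _ => Finset.sum_congr rfl fun c _ => ?_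
    have : (LineageExpr.and φ ψ).eval (e.symm (b, c)) = (Fb b && Gb c) := by
      simp only [LineageExpr.eval, hevφ, hevψ]
    rw [this, hprod]
    cases hb : Fb b <;> cases hc : Gb c <;> simp
  have h2 : Psum p φ = SA * TY := by
    rw [Psum, hkey]
    rw [hSA, hTY, Finset.sum_mul_sum]
    refine Finset.sum_congr rfl fun b _ => Finset.sum_congr rfl fun c _ => ?_
    rw [hevφ, hprod]
    cases hb : Fb b <;> simp
  have h3 : Psum p ψ = TX * SB := by
    rw [Psum, hkey]
    rw [hTX, hSB, Finset.sum_mul_sum]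
    refine Finset.sum_congr rfl fun b _ => Finset.sum_congr rfl fun c _ => ?_
    rw [hevψ, hprod]
    cases hc : Gb c <;> simp
  have h4 : TX * TY = 1 := by
    rw [← Psum_total p hp0 hp1, hkey (fun a => ∏ v, Wt p v (a v)), hTX, hTY,
      Finset.sum_mul_sum]
    exact Finset.sum_congr rfl fun b _ => Finset.sum_congr rfl fun c _ => (hprod b c).symm
  rw [h1, h2, h3]
  linear_combination (-(SA * SB)) * h4

/-- Formulas whose conjunctions/disjunctions always join variable-disjoint subformulas. -/
inductive LIndep {V : Type} : LineageExpr V → Prop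
  | var (v : V) : LIndep (LineageExpr.var v)
  | not {φ : LineageExpr V} : LIndep φ → LIndep (LineageExpr.not φ)
  | and {φ ψ : LineageExpr V} : LIndep φ → LIndep ψ → Disjoint φ.vars ψ.vars →
      LIndep (LineageExpr.and φ ψ)
  | or {φ ψ : LineageExpr V} : LIndep φ → LIndep ψ → Disjoint φ.vars ψ.vars →
      LIndep (LineageExpr.or φ ψ)

lemma Psum_eq_Pe {V : Type} [Fintype V] [DecidableEq V]
    (p : V → ℝ) (hp0 : ∀ v, 0 ≤ p v) (hp1 : ∀ v, p v ≤ 1)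
    {φ : LineageExpr V} (hφ : LIndep φ) : Psum p φ = Pe p φ := by
  induction hφ with
  | var v => rw [Psum_var p hp0 hp1, Pe]
  | not h ih => rw [Psum_not p hp0 hp1, Pe, ih]
  | and h1 h2 hd ih1 ih2 => rw [Psum_and_split p hp0 hp1 _ _ hd, Pe, ih1, ih2]
  | or h1 h2 hd ih1 ih2 =>
      rw [Psum_or, Psum_and_split p hp0 hp1 _ _ hd, Pe, ih1, ih2]

/- ===================== Structural part ===================== -/

/-- Variables introduced by base relation `i`. -/
def baseVars {ι F V : Type} (R : ι → Set (TPTuple F V)) (i : ι) : Set V :=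
  {v | ∃ u ∈ R i, u.lam = LineageExpr.var v}

/-- Variables available to a query. -/
def qVars {ι F V : Type} (R : ι → Set (TPTuple F V)) (q : TPQuery ι) : Set V :=
  {v | ∃ i ∈ q.idxList, v ∈ baseVars R i}

lemma lamAt_eq_some {F V : Type} {r : Set (TPTuple F V)} {f : F} {t : ℕ}
    {l : LineageExpr V} (h : lamAt r f t = some l) : ∃ u ∈ r, u.lam = l := by
  by_cases hex : ∃ u, u ∈ r ∧ u.fact = f ∧ u.ts ≤ t ∧ t < u.te
  · rw [lamAt, dif_pos hex] at h
    exact ⟨hex.choose, hex.choose_spec.1, Option.some_injective _ h⟩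
  · rw [lamAt, dif_neg hex] at h
    exact absurd h (by simp)

lemma gOp_indep {V : Type} {op : TPOp} {l1 l2 : Option (LineageExpr V)}
    {lam : LineageExpr V} {U1 U2 : Set V} (hd : Disjoint U1 U2)
    (h1 : ∀ a, l1 = some a → LIndep a ∧ a.vars ⊆ U1)
    (h2 : ∀ b, l2 = some b → LIndep b ∧ b.vars ⊆ U2)
    (h : gOp op l1 l2 = some lam) :
    LIndep lam ∧ lam.vars ⊆ U1 ∪ U2 := by
  cases op with
  | inter =>
      cases l1 with
      | none => simp [gOp] at h
      | some a =>
          cases l2 with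
          | none => simp [gOp] at h
          | some b =>
              simp only [gOp, Option.some_inj] at h
              obtain ⟨ha, hs1⟩ := h1 a rfl
              obtain ⟨hb, hs2⟩ := h2 b rfl
              subst h
              exact ⟨LIndep.and ha hb (hd.mono hs1 hs2),
                Set.union_subset_union hs1 hs2⟩
  | diff =>
      cases l1 with
      | none => simp [gOp] at h
      | some a =>
          cases l2 with
          | none =>
              simp only [gOp, Option.some_inj] at h
              obtain ⟨ha, hs1⟩ := h1 a rfl
              subst h
              exact ⟨ha, hs1.trans Set.subset_union_left⟩
          | some b =>
              simp only [gOp, Option.some_inj] at h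
              obtain ⟨ha, hs1⟩ := h1 a rfl
              obtain ⟨hb, hs2⟩ := h2 b rfl
              subst h
              exact ⟨LIndep.and ha (LIndep.not hb) (hd.mono hs1 hs2),
                Set.union_subset_union hs1 hs2⟩
  | union =>
      cases l1 with
      | none =>
          cases l2 with
          | none => simp [gOp] at h
          | some b =>
              simp only [gOp, Option.some_inj] at h
              obtain ⟨hb, hs2⟩ := h2 b rfl
              subst h
              exact ⟨hb, hs2.trans Set.subset_union_right⟩
      | some a =>
          cases l2 with
          | none =>
              simp only [gOp, Option.some_inj] at h
              obtain ⟨ha, hs1⟩ := h1 a rfl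
              subst h
              exact ⟨ha, hs1.trans Set.subset_union_left⟩
          | some b =>
              simp only [gOp, Option.some_inj] at h
              obtain ⟨ha, hs1⟩ := h1 a rfl
              obtain ⟨hb, hs2⟩ := h2 b rfl
              subst h
              exact ⟨LIndep.or ha hb (hd.mono hs1 hs2),
                Set.union_subset_union hs1 hs2⟩

lemma qVars_disjoint {ι F V : Type} {R : ι → Set (TPTuple F V)}
    (hatom : AtomicDistinctLineages R) {q1 q2 : TPQuery ι}
    (h12 : q1.idxList.Disjoint q2.idxList) :
    Disjoint (qVars R q1) (qVars R q2) := by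
  rw [Set.disjoint_left]
  rintro v ⟨i, hi, u1, hu1, hl1⟩ ⟨j, hj, u2, hu2, hl2⟩
  have hij : i ≠ j := fun h => h12 hi (h ▸ hj)
  exact hatom.2 i j u1 hu1 u2 hu2 (Or.inl hij) (hl1.trans hl2.symm)

lemma qVars_node {ι F V : Type} (R : ι → Set (TPTuple F V)) (l1 l2 : List ι)
    (q : TPQuery ι) (hq : q.idxList = l1 ++ l2) :
    qVars R q = {v | ∃ i ∈ l1, v ∈ baseVars R i} ∪ {v | ∃ i ∈ l2, v ∈ baseVars R i} := by
  ext v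
  simp [qVars, hq, List.mem_append, or_and_right, exists_or, Set.mem_union]

lemma opResult_struct {ι F V : Type} {R : ι → Set (TPTuple F V)}
    (hatom : AtomicDistinctLineages R) {op : TPOp} {q1 q2 : TPQuery ι}
    (ih1 : q1.idxList.Nodup → ∀ u ∈ q1.eval R, LIndep u.lam ∧ u.lam.vars ⊆ qVars R q1)
    (ih2 : q2.idxList.Nodup → ∀ u ∈ q2.eval R, LIndep u.lam ∧ u.lam.vars ⊆ qVars R q2)
    (hnd : (q1.idxList ++ q2.idxList).Nodup)
    {u : TPTuple F V} (hu : u ∈ opResult op (q1.eval R) (q2.eval R)) :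
    LIndep u.lam ∧ u.lam.vars ⊆ qVars R q1 ∪ qVars R q2 := by
  obtain ⟨h1n, h2n, h12⟩ := List.nodup_append'.mp hnd
  obtain ⟨hlt, l1, l2, hfil, hg, hconst, -, -⟩ := hu
  have hts := hconst u.ts le_rfl hlt
  refine gOp_indep (qVars_disjoint hatom h12) ?_ ?_ hg
  · intro a ha
    obtain ⟨w, hw, hwl⟩ := lamAt_eq_some (hts.1.trans ha)
    exact hwl ▸ ih1 h1n w hw
  · intro b hb
    obtain ⟨w, hw, hwl⟩ := lamAt_eq_some (hts.2.trans hb)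
    exact hwl ▸ ih2 h2n w hw

lemma query_struct {ι F V : Type} (R : ι → Set (TPTuple F V))
    (hatom : AtomicDistinctLineages R) :
    ∀ q : TPQuery ι, q.idxList.Nodup →
      ∀ u ∈ q.eval R, LIndep u.lam ∧ u.lam.vars ⊆ qVars R q := by
  intro q
  induction q with
  | base i =>
      intro _ u hu
      obtain ⟨v, hv⟩ := hatom.1 i u hu
      refine ⟨hv ▸ LIndep.var v, ?_⟩
      rw [hv]
      intro x hx
      rcases hx with rfl
      exact ⟨i, by simp [TPQuery.idxList], u, hu, hv⟩
  | inter q1 q2 ih1 ih2 =>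
      intro hnd u hu
      have hnd' : (q1.idxList ++ q2.idxList).Nodup := hnd
      have h := opResult_struct hatom ih1 ih2 hnd' hu
      rw [qVars_node R q1.idxList q2.idxList (q1.inter q2) rfl]
      exact h
  | diff q1 q2 ih1 ih2 =>
      intro hnd u hu
      have hnd' : (q1.idxList ++ q2.idxList).Nodup := hnd
      have h := opResult_struct hatom ih1 ih2 hnd' hu
      rw [qVars_node R q1.idxList q2.idxList (q1.diff q2) rfl]
      exact h
  | union q1 q2 ih1 ih2 =>
      intro hnd u hu
      have hnd' : (q1.idxList ++ q2.idxList).Nodup := hnd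
      have h := opResult_struct hatom ih1 ih2 hnd' hu
      rw [qVars_node R q1.idxList q2.idxList (q1.union q2) rfl]
      exact h


open MeasureTheory in
/-- For a non-repeating TP set query `Q` over duplicate-free TP
relations with atomic, pairwise distinct base lineages, where the tuple
identifiers form the finite type `V` and assignments are distributed by the
product Bernoulli measure (identifier `v` true with probability `p v ∈ [0,1]`),
the marginal probability of every result tuple's lineage equals its recursive
valuation `Pe`. -/
theorem tp_nonrepeating_query_probability_eq_Pe {ι F V : Type} [Fintype V]
    (R : ι → Set (TPTuple F V))
    (hfin : ∀ i, (R i).Finite) (hWF : ∀ i, WF (R i)) (hDF : ∀ i, DupFree (R i))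
    (hatom : AtomicDistinctLineages R)
    (hall : ∀ v : V, ∃ i, ∃ u ∈ R i, u.lam = LineageExpr.var v)
    (q : TPQuery ι) (hnr : q.NonRepeating)
    (p : V → ℝ) (hp0 : ∀ v, 0 ≤ p v) (hp1 : ∀ v, p v ≤ 1) :
    ∀ u ∈ q.eval R,
      (prodBernoulli (fun v => ENNReal.ofReal (p v))
          (fun v => ENNReal.ofReal_le_one.mpr (hp1 v))
          {a | u.lam.eval a = true}).toReal = Pe p u.lam := by
  intro u hu
  classical
  have hst := query_struct R hatom q hnr u hu
  rw [← Psum_eq_Pe p hp0 hp1 hst.1]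
  exact Psum_eq_toReal p hp0 hp1 u.lam
end
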